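/- The system of base spaces $\{L_{ij} : 1 \le i < j \le N\}$ of the hard ball system is transitive: the subgroup of the special orthogonal group of $\mathcal{Z}$ generated by the groups $\mathcal{G}_{ij} = \{U \in \mathrm{SO}(\mathcal{Z}) : U a = a \text{ for all } a \in L_{ij}^{\perp}\}$ acts transitively on the unit sphere of $\mathcal{Z}$. -/

import Mathlib

noncomputable section

/-- The zero-total-momentum subspace `𝒵 ⊆ (ℝ^ν)^N`. -/
def momZero (N ν : ℕ) : Submodule ℝ (EuclideanSpace ℝ (Fin N × Fin ν)) where
  carrier := {v | ∀ a : Fin ν, ∑ i : Fin N, v (i, a) = 0}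
  add_mem' := by
    intro x y hx hy a
    simp only [Set.mem_setOf_eq, PiLp.add_apply] at *
    simp [Finset.sum_add_distrib, hx a, hy a]
  zero_mem' := by intro a; simp
  smul_mem' := by
    intro c x hx a
    simp only [Set.mem_setOf_eq, PiLp.smul_apply, smul_eq_mul] at *
    simp [← Finset.mul_sum, hx a]

/-- The base space `L_{ij} ⊆ 𝒵`: velocities supported on balls `i` and `j`. -/
def baseSpace (N ν : ℕ) (i j : Fin N) : Submodule ℝ ↥(momZero N ν) where
  carrier := {v | ∀ m : Fin N, m ≠ i → m ≠ j → ∀ a : Fin ν,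
    (v : EuclideanSpace ℝ (Fin N × Fin ν)) (m, a) = 0}
  add_mem' := by
    intro x y hx hy m hm1 hm2 a
    simp [Set.mem_setOf_eq] at *
    simp [hx m hm1 hm2 a, hy m hm1 hm2 a]
  zero_mem' := by intro m _ _ a; simp
  smul_mem' := by
    intro c x hx m hm1 hm2 a
    simp [Set.mem_setOf_eq] at *
    simp [hx m hm1 hm2 a]

/-- The group `𝒢_{ij} = {U ∈ SO(𝒵) : U a = a for all a ∈ L_{ij}ᗮ}`. -/
def rotBall (N ν : ℕ) (i j : Fin N) :
    Set (↥(momZero N ν) ≃ₗᵢ[ℝ] ↥(momZero N ν)) :=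
  {U | LinearEquiv.det U.toLinearEquiv = 1 ∧ ∀ a ∈ (baseSpace N ν i j)ᗮ, U a = a}

namespace HardBall
open scoped RealInnerProductSpace
open Finset

variable {N ν : ℕ}

/-- The velocity of ball `m`. -/
def compv (x : EuclideanSpace ℝ (Fin N × Fin ν)) (m : Fin N) : EuclideanSpace ℝ (Fin ν) :=
  WithLp.toLp 2 (fun a => x (m, a))

@[simp] lemma compv_apply (x : EuclideanSpace ℝ (Fin N × Fin ν)) (m : Fin N) (a : Fin ν) :
    compv x m a = x (m, a) := rfl

lemma compv_add (x y : EuclideanSpace ℝ (Fin N × Fin ν)) (m : Fin N) :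
    compv (x + y) m = compv x m + compv y m := by
  ext a; simp

lemma inner_eq_sum (x y : EuclideanSpace ℝ (Fin N × Fin ν)) :
    ⟪x, y⟫ = ∑ m : Fin N, ⟪compv x m, compv y m⟫ := by
  simp only [PiLp.inner_apply, RCLike.inner_apply, conj_trivial, compv_apply]
  rw [Fintype.sum_prod_type]

lemma normsq_eq_sum (x : EuclideanSpace ℝ (Fin N × Fin ν)) :
    ‖x‖ ^ 2 = ∑ m : Fin N, ‖compv x m‖ ^ 2 := by
  rw [← real_inner_self_eq_norm_sq, inner_eq_sum]
  exact Finset.sum_congr rfl fun m _ => real_inner_self_eq_norm_sq _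

lemma sum_split2 {M : Type*} [AddCommMonoid M] {k l : Fin N} (hkl : k ≠ l) (f : Fin N → M) :
    ∑ m, f m = f k + (f l + ∑ m ∈ (univ.erase k).erase l, f m) := by
  rw [Finset.add_sum_erase _ f (Finset.mem_erase.mpr ⟨hkl.symm, mem_univ l⟩),
    Finset.add_sum_erase _ f (mem_univ k)]

/-- The element of `𝒵` supported on balls `i`, `j` with velocities `d`, `-d`. -/
def pairVec (i j : Fin N) (d : EuclideanSpace ℝ (Fin ν)) :
    EuclideanSpace ℝ (Fin N × Fin ν) :=
  WithLp.toLp 2 (fun q : Fin N × Fin ν => (if q.1 = i then d q.2 else 0) + (if q.1 = j then -d q.2 else 0))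

lemma pairVec_mem (i j : Fin N) (d : EuclideanSpace ℝ (Fin ν)) :
    pairVec i j d ∈ momZero N ν := by
  intro a
  show ∑ m : Fin N, ((if m = i then d a else 0) + (if m = j then -d a else 0)) = 0
  rw [Finset.sum_add_distrib, Finset.sum_ite_eq' univ i (fun _ => d a),
    Finset.sum_ite_eq' univ j (fun _ => -d a)]
  simp

def pairVecZ (i j : Fin N) (d : EuclideanSpace ℝ (Fin ν)) : ↥(momZero N ν) :=
  ⟨pairVec i j d, pairVec_mem i j d⟩

lemma pairVecZ_mem_baseSpace (i j : Fin N) (d : EuclideanSpace ℝ (Fin ν)) :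
    pairVecZ i j d ∈ baseSpace N ν i j := by
  intro m hmi hmj a
  show (if m = i then d a else 0) + (if m = j then -d a else 0) = 0
  rw [if_neg hmi, if_neg hmj, add_zero]

lemma compv_pairVec_left {i j : Fin N} (hij : i ≠ j) (d : EuclideanSpace ℝ (Fin ν)) :
    compv (pairVec i j d) i = d := by
  ext a
  show (if i = i then d a else 0) + (if i = j then -d a else 0) = d a
  rw [if_pos rfl, if_neg hij, add_zero]

lemma compv_pairVec_right {i j : Fin N} (hij : i ≠ j) (d : EuclideanSpace ℝ (Fin ν)) :
    compv (pairVec i j d) j = -d := by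
  ext a
  show (if j = i then d a else 0) + (if j = j then -d a else 0) = -d a
  rw [if_neg hij.symm, if_pos rfl, zero_add]

lemma compv_pairVec_other {i j m : Fin N} (hmi : m ≠ i) (hmj : m ≠ j)
    (d : EuclideanSpace ℝ (Fin ν)) : compv (pairVec i j d) m = 0 := by
  ext a
  show (if m = i then d a else 0) + (if m = j then -d a else 0) = 0
  rw [if_neg hmi, if_neg hmj, add_zero]

lemma inner_pairVec {i j : Fin N} (hij : i ≠ j) (d : EuclideanSpace ℝ (Fin ν))
    (x : EuclideanSpace ℝ (Fin N × Fin ν)) :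
    ⟪pairVec i j d, x⟫ = ⟪d, compv x i - compv x j⟫ := by
  rw [inner_eq_sum, sum_split2 hij, compv_pairVec_left hij, compv_pairVec_right hij]
  have h0 : ∑ m ∈ (univ.erase i).erase j, ⟪compv (pairVec i j d) m, compv x m⟫ = 0 := by
    apply Finset.sum_eq_zero
    intro m hm
    obtain ⟨hmj, hmi, -⟩ : m ≠ j ∧ m ≠ i ∧ True := by
      have h1 := Finset.mem_erase.mp hm
      have h2 := Finset.mem_erase.mp h1.2
      exact ⟨h1.1, h2.1, trivial⟩
    rw [compv_pairVec_other hmi hmj, inner_zero_left]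
  rw [h0, add_zero, inner_neg_left, inner_sub_right]
  ring

lemma pairVecZ_ne_zero {i j : Fin N} (hij : i ≠ j) {d : EuclideanSpace ℝ (Fin ν)}
    (hd : d ≠ 0) : pairVecZ i j d ≠ 0 := by
  intro h
  apply hd
  ext a
  have h2 := congrArg (fun z : ↥(momZero N ν) =>
    (z : EuclideanSpace ℝ (Fin N × Fin ν)) (i, a)) h
  simp only [pairVecZ, pairVec] at h2
  simpa [hij] using h2

lemma pair_norm_identity {F : Type*} [NormedAddCommGroup F] [InnerProductSpace ℝ F]
    (a b c : F) (h : ‖c - (2⁻¹:ℝ) • (a + b)‖ = ‖a - (2⁻¹:ℝ) • (a + b)‖) :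
    ‖c‖ ^ 2 + ‖b - (c - a)‖ ^ 2 = ‖a‖ ^ 2 + ‖b‖ ^ 2 := by
  have h2 := congrArg (fun u : ℝ => u ^ 2) h
  rw [norm_sub_sq_real, norm_sub_sq_real, real_inner_smul_right, real_inner_smul_right,
    inner_add_right, inner_add_right] at h2
  have hbc : b - (c - a) = a + b - c := by abel
  rw [hbc, norm_sub_sq_real, norm_add_sq_real, inner_add_left]
  have c1 : ⟪c, a⟫ = ⟪a, c⟫ := real_inner_comm _ _
  have c2 : ⟪c, b⟫ = ⟪b, c⟫ := real_inner_comm _ _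
  have c3 : ⟪a, a⟫ = ‖a‖ ^ 2 := real_inner_self_eq_norm_sq a
  rw [c1, c2, c3] at h2
  linarith


lemma eq_of_sq_eq {a b : ℝ} (ha : 0 ≤ a) (hb : 0 ≤ b) (h : a ^ 2 = b ^ 2) : a = b := by
  nlinarith

lemma exists_ne_zero_inner_zero {F : Type*} [NormedAddCommGroup F] [InnerProductSpace ℝ F]
    [FiniteDimensional ℝ F] (h2 : 2 ≤ Module.finrank ℝ F) (x : F) :
    ∃ w : F, w ≠ 0 ∧ ⟪w, x⟫ = 0 := by
  have hne : ((ℝ ∙ x)ᗮ : Submodule ℝ F) ≠ ⊥ := by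
    intro hbot
    have h1 : Module.finrank ℝ (ℝ ∙ x) + Module.finrank ℝ (ℝ ∙ x)ᗮ = Module.finrank ℝ F :=
      Submodule.finrank_add_finrank_orthogonal _
    have h3 : Module.finrank ℝ (ℝ ∙ x) ≤ 1 := by
      by_cases hx : x = 0
      · subst hx
        rw [Submodule.span_zero_singleton]
        simp [finrank_bot]
      · rw [finrank_span_singleton hx]
    rw [hbot, finrank_bot] at h1
    omega
  obtain ⟨w, hw, hw0⟩ := Submodule.exists_mem_ne_zero_of_ne_bot hne
  exact ⟨w, hw0, Submodule.mem_orthogonal_singleton_iff_inner_left.mp hw⟩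

lemma my_det_reflection {F : Type*} [NormedAddCommGroup F] [InnerProductSpace ℝ F]
    [FiniteDimensional ℝ F] {g : F} (hg : g ≠ 0) :
    LinearMap.det ((Submodule.reflection (ℝ ∙ g)ᗮ).toLinearEquiv : F →ₗ[ℝ] F) = -1 := by
  have h1 : LinearMap.det (Submodule.reflection (ℝ ∙ g)ᗮ).toLinearMap = -1 := by
    rw [Submodule.det_reflection, Submodule.orthogonal_orthogonal, finrank_span_singleton hg, pow_one]
  exact h1

lemma sphere_cap {ν : ℕ} (hν : 2 ≤ ν) (s z : EuclideanSpace ℝ (Fin ν)) (r : ℝ) (hr : 0 ≤ r)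
    (h : |⟪s, z⟫| ≤ r * ‖z‖) : ∃ c, ‖c - s‖ = r ∧ ⟪c, z⟫ = 0 := by
  have hfr : 2 ≤ Module.finrank ℝ (EuclideanSpace ℝ (Fin ν)) := by
    simpa [finrank_euclideanSpace] using hν
  obtain ⟨w, hw0, hwz⟩ := exists_ne_zero_inner_zero hfr z
  obtain ⟨wu, hwu1, hwuz⟩ : ∃ wu : EuclideanSpace ℝ (Fin ν), ‖wu‖ = 1 ∧ ⟪wu, z⟫ = 0 :=
    ⟨(‖w‖⁻¹ : ℝ) • w, norm_smul_inv_norm hw0, by rw [real_inner_smul_left, hwz, mul_zero]⟩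
  by_cases hz : z = 0
  · refine ⟨s + r • wu, ?_, by simp [hz]⟩
    rw [add_sub_cancel_left, norm_smul, hwu1]
    simp [abs_of_nonneg hr]
  · have hz0 : (0:ℝ) < ‖z‖ := norm_pos_iff.mpr hz
    obtain ⟨zu, hzu1, hzuz, hwzu⟩ : ∃ zu : EuclideanSpace ℝ (Fin ν),
        ‖zu‖ = 1 ∧ ⟪zu, z⟫ = ‖z‖ ∧ ⟪wu, zu⟫ = 0 := by
      refine ⟨(‖z‖⁻¹ : ℝ) • z, norm_smul_inv_norm hz, ?_, ?_⟩
      · rw [real_inner_smul_left, real_inner_self_eq_norm_sq]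
        field_simp
      · rw [real_inner_smul_right, hwuz, mul_zero]
    set α : ℝ := ⟪s, z⟫ / ‖z‖ with hα
    have hαz : α * ‖z‖ = ⟪s, z⟫ := by rw [hα]; field_simp
    have hαr : |α| ≤ r := by
      rw [hα, abs_div, abs_of_nonneg hz0.le, div_le_iff₀ hz0]
      linarith [h]
    have hα2 : α ^ 2 ≤ r ^ 2 := by nlinarith [abs_nonneg α, sq_abs α]
    set t := Real.sqrt (r ^ 2 - α ^ 2) with htdef
    have ht0 : 0 ≤ t := Real.sqrt_nonneg _
    have ht2 : t ^ 2 = r ^ 2 - α ^ 2 := Real.sq_sqrt (by linarith)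
    refine ⟨s - α • zu + t • wu, ?_, ?_⟩
    · have hdd : s - α • zu + t • wu - s = t • wu - α • zu := by abel
      rw [hdd]
      apply eq_of_sq_eq (norm_nonneg _) hr
      rw [norm_sub_sq_real, real_inner_smul_left, real_inner_smul_right, hwzu,
        norm_smul, norm_smul, hwu1, hzu1, mul_one, mul_one, Real.norm_eq_abs,
        Real.norm_eq_abs, abs_of_nonneg ht0]
      nlinarith [sq_abs α]
    · rw [inner_add_left, inner_sub_left, real_inner_smul_left, real_inner_smul_left,
        hzuz, hwuz, hαz]
      ring

lemma baseSpace_comm (i j : Fin N) : baseSpace N ν i j = baseSpace N ν j i := by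
  apply le_antisymm <;> exact fun x hx m h1 h2 a => hx m h2 h1 a

lemma rotBall_comm (i j : Fin N) : rotBall N ν i j = rotBall N ν j i := by
  unfold rotBall
  rw [baseSpace_comm]

/-- The key move: any two elements of `𝒵` with the same norm whose difference lies in
`L_{ij}` are related by an element of `𝒢_{ij}` (a product of two reflections). -/
lemma move (hν : 2 ≤ ν) {i j : Fin N} (hij : i ≠ j) (v w : ↥(momZero N ν))
    (hnorm : ‖v‖ = ‖w‖) (hdiff : v - w ∈ baseSpace N ν i j) :
    ∃ U ∈ rotBall N ν i j, U v = w := by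
  by_cases hvw : v = w
  · refine ⟨1, ⟨?_, fun a _ => rfl⟩, by rw [hvw]; rfl⟩
    show LinearEquiv.det (1 : ↥(momZero N ν) ≃ₗᵢ[ℝ] ↥(momZero N ν)).toLinearEquiv = 1
    have h1 : (1 : ↥(momZero N ν) ≃ₗᵢ[ℝ] ↥(momZero N ν)).toLinearEquiv
        = (1 : ↥(momZero N ν) ≃ₗ[ℝ] ↥(momZero N ν)) := rfl
    rw [h1]
    exact map_one LinearEquiv.det
  · have hg1 : v - w ≠ 0 := sub_ne_zero.mpr hvw
    have hfr : 2 ≤ Module.finrank ℝ (EuclideanSpace ℝ (Fin ν)) := by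
      simpa [finrank_euclideanSpace] using hν
    obtain ⟨d₂, hd0, hd⟩ := exists_ne_zero_inner_zero hfr
      (compv (w : EuclideanSpace ℝ (Fin N × Fin ν)) i -
        compv (w : EuclideanSpace ℝ (Fin N × Fin ν)) j)
    have hg₂L : pairVecZ i j d₂ ∈ baseSpace N ν i j := pairVecZ_mem_baseSpace i j d₂
    have hg₂0 : pairVecZ i j d₂ ≠ 0 := pairVecZ_ne_zero hij hd0
    have hg₂w : ⟪pairVecZ i j d₂, w⟫ = 0 := by
      have h3 : ⟪(pairVecZ i j d₂ : EuclideanSpace ℝ (Fin N × Fin ν)),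
          (w : EuclideanSpace ℝ (Fin N × Fin ν))⟫ = 0 := by
        rw [show ((pairVecZ i j d₂ : ↥(momZero N ν)) : EuclideanSpace ℝ (Fin N × Fin ν))
            = pairVec i j d₂ from rfl, inner_pairVec hij]
        exact hd
      exact h3
    set U := (Submodule.reflection (ℝ ∙ (v - w))ᗮ).trans (Submodule.reflection (ℝ ∙ (pairVecZ i j d₂))ᗮ) with hU
    have hUv : U v = w := by
      rw [hU, LinearIsometryEquiv.trans_apply, Submodule.reflection_sub hnorm]
      exact Submodule.reflection_mem_subspace_eq_self
        (Submodule.mem_orthogonal_singleton_iff_inner_right.mpr hg₂w)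
    refine ⟨U, ⟨?_, ?_⟩, hUv⟩
    · apply Units.ext
      rw [LinearEquiv.coe_det]
      have h4 : (U.toLinearEquiv : ↥(momZero N ν) →ₗ[ℝ] ↥(momZero N ν)) =
          ((Submodule.reflection (ℝ ∙ (pairVecZ i j d₂))ᗮ).toLinearEquiv :
            ↥(momZero N ν) →ₗ[ℝ] ↥(momZero N ν)) ∘ₗ
          ((Submodule.reflection (ℝ ∙ (v - w))ᗮ).toLinearEquiv :
            ↥(momZero N ν) →ₗ[ℝ] ↥(momZero N ν)) := rfl
      rw [h4, LinearMap.det_comp, my_det_reflection hg₂0, my_det_reflection hg1]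
      norm_num
    · intro a ha
      have h1 : a ∈ (ℝ ∙ (v - w))ᗮ :=
        Submodule.mem_orthogonal_singleton_iff_inner_right.mpr
          (((Submodule.mem_orthogonal _ a).mp ha) _ hdiff)
      have h2 : a ∈ (ℝ ∙ (pairVecZ i j d₂))ᗮ :=
        Submodule.mem_orthogonal_singleton_iff_inner_right.mpr
          (((Submodule.mem_orthogonal _ a).mp ha) _ hg₂L)
      rw [hU, LinearIsometryEquiv.trans_apply, Submodule.reflection_mem_subspace_eq_self h1,
        Submodule.reflection_mem_subspace_eq_self h2]

/-- Reachability under the group generated by all the `𝒢_{ij}`. -/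
def Reach (N ν : ℕ) (v w : ↥(momZero N ν)) : Prop :=
  ∃ U ∈ Subgroup.closure
      (⋃ (p : Fin N × Fin N) (_ : p.1 < p.2), rotBall N ν p.1 p.2),
    U v = w

lemma reach_refl (v : ↥(momZero N ν)) : Reach N ν v v :=
  ⟨1, Subgroup.one_mem _, rfl⟩

lemma reach_trans {u v w : ↥(momZero N ν)} (h1 : Reach N ν u v) (h2 : Reach N ν v w) :
    Reach N ν u w := by
  obtain ⟨U, hU, hUu⟩ := h1
  obtain ⟨V, hV, hVv⟩ := h2
  exact ⟨V * U, Subgroup.mul_mem _ hV hU, by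
    show V (U u) = w
    rw [hUu, hVv]⟩

lemma reach_symm {u v : ↥(momZero N ν)} (h : Reach N ν u v) : Reach N ν v u := by
  obtain ⟨U, hU, hUu⟩ := h
  exact ⟨U⁻¹, Subgroup.inv_mem _ hU, by
    show U.symm v = u
    rw [← hUu, LinearIsometryEquiv.symm_apply_apply]⟩

lemma reach_norm {u v : ↥(momZero N ν)} (h : Reach N ν u v) : ‖u‖ = ‖v‖ := by
  obtain ⟨U, _, hUu⟩ := h
  rw [← hUu, LinearIsometryEquiv.norm_map]

lemma stepReach (hν : 2 ≤ ν) {i j : Fin N} (hij : i ≠ j) {v w : ↥(momZero N ν)}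
    (hnorm : ‖v‖ = ‖w‖) (hdiff : v - w ∈ baseSpace N ν i j) : Reach N ν v w := by
  obtain ⟨U, hU, hUv⟩ := move hν hij v w hnorm hdiff
  rcases lt_or_gt_of_ne hij with h | h
  · exact ⟨U, Subgroup.subset_closure
      (Set.mem_iUnion.mpr ⟨(i, j), Set.mem_iUnion.mpr ⟨h, hU⟩⟩), hUv⟩
  · rw [rotBall_comm] at hU
    exact ⟨U, Subgroup.subset_closure
      (Set.mem_iUnion.mpr ⟨(j, i), Set.mem_iUnion.mpr ⟨h, hU⟩⟩), hUv⟩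


/-- Kill the velocity of ball `k` (not a helper ball), without waking sleeping balls. -/
lemma kill_one (hν : 2 ≤ ν) {z₀ z₁ k : Fin N} (hz : z₀ ≠ z₁) (hk0 : k ≠ z₀) (hk1 : k ≠ z₁)
    (v : ↥(momZero N ν)) :
    ∃ x : ↥(momZero N ν), Reach N ν v x ∧
      compv (x : EuclideanSpace ℝ (Fin N × Fin ν)) k = 0 ∧
      ∀ m, m ≠ z₀ → m ≠ z₁ → m ≠ k →
        compv (v : EuclideanSpace ℝ (Fin N × Fin ν)) m = 0 →
        compv (x : EuclideanSpace ℝ (Fin N × Fin ν)) m = 0 := by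
  classical
  by_cases hk : compv (v : EuclideanSpace ℝ (Fin N × Fin ν)) k = 0
  · exact ⟨v, reach_refl v, hk, fun m _ _ _ h => h⟩
  set vc : Fin N → EuclideanSpace ℝ (Fin ν) :=
    fun m => compv (v : EuclideanSpace ℝ (Fin N × Fin ν)) m with hvc
  have hzero : ∑ m : Fin N, ⟪vc k, vc m⟫ = 0 := by
    have hv2 : ∀ a : Fin ν, ∑ m : Fin N,
        (v : EuclideanSpace ℝ (Fin N × Fin ν)) (m, a) = 0 := v.2
    simp only [hvc, PiLp.inner_apply, RCLike.inner_apply, conj_trivial, compv_apply]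
    rw [Finset.sum_comm]
    apply Finset.sum_eq_zero
    intro a _
    rw [← Finset.sum_mul, hv2 a, zero_mul]
  have main : ∃ l p : Fin N, l ≠ k ∧ p ≠ k ∧ p ≠ l ∧ (p = z₀ ∨ p = z₁) ∧
      (vc l ≠ 0 ∨ l = z₀ ∨ l = z₁) ∧
      |⟪vc k + vc l, vc p⟫| ≤ ‖vc k - vc l‖ * ‖vc p‖ := by
    by_contra hcon
    push_neg at hcon
    have key : ∀ l, l ≠ k → (vc l ≠ 0 ∨ l = z₀ ∨ l = z₁) → 0 < ⟪vc k, vc l⟫ := by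
      intro l hlk hl
      have hex : ∃ p : Fin N, p ≠ k ∧ p ≠ l ∧ (p = z₀ ∨ p = z₁) := by
        by_cases h : l = z₀
        · exact ⟨z₁, Ne.symm hk1, by rw [h]; exact hz.symm, Or.inr rfl⟩
        · exact ⟨z₀, Ne.symm hk0, fun hh => h hh.symm, Or.inl rfl⟩
      obtain ⟨p, hpk, hpl, hp01⟩ := hex
      have hstrict := hcon l p hlk hpk hpl hp01 hl
      have hCS := abs_real_inner_le_norm (vc k + vc l) (vc p)
      have hlt : ‖vc k - vc l‖ < ‖vc k + vc l‖ :=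
        lt_of_mul_lt_mul_right (lt_of_lt_of_le hstrict hCS) (norm_nonneg (vc p))
      nlinarith [norm_add_sq_real (vc k) (vc l), norm_sub_sq_real (vc k) (vc l),
        norm_nonneg (vc k - vc l), norm_nonneg (vc k + vc l), hlt]
    have hpos : (0:ℝ) < ∑ m : Fin N, ⟪vc k, vc m⟫ := by
      rw [← Finset.add_sum_erase _ _ (Finset.mem_univ k)]
      apply add_pos_of_pos_of_nonneg
      · rw [real_inner_self_eq_norm_sq]
        exact pow_pos (norm_pos_iff.mpr hk) 2
      · apply Finset.sum_nonneg
        intro m hm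
        by_cases h0 : vc m = 0
        · rw [h0, inner_zero_right]
        · exact (key m (Finset.mem_erase.mp hm).1 (Or.inl h0)).le
    exact absurd hzero (ne_of_gt hpos)
  obtain ⟨l, p, hlk, hpk, hpl, hp01, hlz, hC⟩ := main
  set s : EuclideanSpace ℝ (Fin ν) := (2⁻¹ : ℝ) • (vc k + vc l) with hs
  have hks : vc k - s = (2⁻¹ : ℝ) • (vc k - vc l) := by
    rw [hs]; module
  set r : ℝ := ‖vc k - s‖ with hr
  have hrval : r = 2⁻¹ * ‖vc k - vc l‖ := by
    rw [hr, hks, norm_smul, Real.norm_eq_abs]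
    norm_num
  have hcap : |⟪s, vc p⟫| ≤ r * ‖vc p‖ := by
    rw [hs, real_inner_smul_left, abs_mul, hrval,
      abs_of_nonneg (by norm_num : (0:ℝ) ≤ 2⁻¹), mul_assoc]
    exact mul_le_mul_of_nonneg_left hC (by norm_num)
  obtain ⟨c, hc1, hc2⟩ := sphere_cap hν s (vc p) r (norm_nonneg _) hcap
  have hklne : k ≠ l := Ne.symm hlk
  have hkpne : k ≠ p := Ne.symm hpk
  -- first move: rotate the pair (k, l) so that ball k's velocity becomes c ⊥ vc p
  set g₁ : ↥(momZero N ν) := pairVecZ k l (c - vc k) with hg₁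
  set w₁ : ↥(momZero N ν) := v + g₁ with hw₁
  have hco : (w₁ : EuclideanSpace ℝ (Fin N × Fin ν)) =
      (v : EuclideanSpace ℝ (Fin N × Fin ν)) + pairVec k l (c - vc k) := rfl
  have hw₁k : compv (w₁ : EuclideanSpace ℝ (Fin N × Fin ν)) k = c := by
    rw [hco, compv_add, compv_pairVec_left hklne]
    show vc k + (c - vc k) = c
    abel
  have hw₁l : compv (w₁ : EuclideanSpace ℝ (Fin N × Fin ν)) l = vc l - (c - vc k) := by
    rw [hco, compv_add, compv_pairVec_right hklne]
    show vc l + -(c - vc k) = vc l - (c - vc k)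
    abel
  have hw₁o : ∀ m, m ≠ k → m ≠ l →
      compv (w₁ : EuclideanSpace ℝ (Fin N × Fin ν)) m = vc m := by
    intro m h1 h2
    rw [hco, compv_add, compv_pairVec_other h1 h2, add_zero]
  have hnorm₁ : ‖v‖ = ‖w₁‖ := by
    have hsq : ‖(v : EuclideanSpace ℝ (Fin N × Fin ν))‖ ^ 2
        = ‖(w₁ : EuclideanSpace ℝ (Fin N × Fin ν))‖ ^ 2 := by
      rw [normsq_eq_sum, normsq_eq_sum, sum_split2 hklne, sum_split2 hklne,
        hw₁k, hw₁l]
      have hrest : ∑ m ∈ (univ.erase k).erase l,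
          ‖compv ((w₁ : EuclideanSpace ℝ (Fin N × Fin ν))) m‖ ^ 2
          = ∑ m ∈ (univ.erase k).erase l,
          ‖compv ((v : EuclideanSpace ℝ (Fin N × Fin ν))) m‖ ^ 2 := by
        apply Finset.sum_congr rfl
        intro m hm
        have h1 := Finset.mem_erase.mp hm
        have h2 := Finset.mem_erase.mp h1.2
        rw [hw₁o m h2.1 h1.1]
      rw [hrest]
      have hiden := pair_norm_identity (vc k) (vc l) c (hc1.trans hr)
      linarith
    exact eq_of_sq_eq (norm_nonneg _) (norm_nonneg _) hsq
  have hdiff₁ : v - w₁ ∈ baseSpace N ν k l := by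
    have hd : v - w₁ = -g₁ := by rw [hw₁]; abel
    rw [hd]
    exact Submodule.neg_mem _ (by rw [hg₁]; exact pairVecZ_mem_baseSpace k l _)
  have hreach₁ : Reach N ν v w₁ := stepReach hν hklne hnorm₁ hdiff₁
  -- second move: transfer ball k's velocity to ball p
  set g₂ : ↥(momZero N ν) := pairVecZ k p (-c) with hg₂
  set w₂ : ↥(momZero N ν) := w₁ + g₂ with hw₂
  have hco₂ : (w₂ : EuclideanSpace ℝ (Fin N × Fin ν)) =
      (w₁ : EuclideanSpace ℝ (Fin N × Fin ν)) + pairVec k p (-c) := rfl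
  have hw₂k : compv (w₂ : EuclideanSpace ℝ (Fin N × Fin ν)) k = 0 := by
    rw [hco₂, compv_add, compv_pairVec_left hkpne, hw₁k]
    abel
  have hw₁p : compv (w₁ : EuclideanSpace ℝ (Fin N × Fin ν)) p = vc p := hw₁o p hpk hpl
  have hw₂p : compv (w₂ : EuclideanSpace ℝ (Fin N × Fin ν)) p = vc p + c := by
    rw [hco₂, compv_add, compv_pairVec_right hkpne, hw₁p, neg_neg]
  have hw₂o : ∀ m, m ≠ k → m ≠ p →
      compv (w₂ : EuclideanSpace ℝ (Fin N × Fin ν)) m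
      = compv (w₁ : EuclideanSpace ℝ (Fin N × Fin ν)) m := by
    intro m h1 h2
    rw [hco₂, compv_add, compv_pairVec_other h1 h2, add_zero]
  have hnorm₂ : ‖w₁‖ = ‖w₂‖ := by
    have hsq : ‖(w₁ : EuclideanSpace ℝ (Fin N × Fin ν))‖ ^ 2
        = ‖(w₂ : EuclideanSpace ℝ (Fin N × Fin ν))‖ ^ 2 := by
      rw [normsq_eq_sum, normsq_eq_sum, sum_split2 hkpne, sum_split2 hkpne,
        hw₁k, hw₁p, hw₂k, hw₂p]
      have hrest : ∑ m ∈ (univ.erase k).erase p,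
          ‖compv ((w₂ : EuclideanSpace ℝ (Fin N × Fin ν))) m‖ ^ 2
          = ∑ m ∈ (univ.erase k).erase p,
          ‖compv ((w₁ : EuclideanSpace ℝ (Fin N × Fin ν))) m‖ ^ 2 := by
        apply Finset.sum_congr rfl
        intro m hm
        have h1 := Finset.mem_erase.mp hm
        have h2 := Finset.mem_erase.mp h1.2
        rw [hw₂o m h2.1 h1.1]
      rw [hrest]
      have hpc : ⟪vc p, c⟫ = 0 := by rw [real_inner_comm]; exact hc2
      have hna := norm_add_sq_real (vc p) c
      rw [hpc] at hna
      rw [norm_zero]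
      linarith
    exact eq_of_sq_eq (norm_nonneg _) (norm_nonneg _) hsq
  have hdiff₂ : w₁ - w₂ ∈ baseSpace N ν k p := by
    have hd : w₁ - w₂ = -g₂ := by rw [hw₂]; abel
    rw [hd]
    exact Submodule.neg_mem _ (by rw [hg₂]; exact pairVecZ_mem_baseSpace k p _)
  have hreach₂ : Reach N ν w₁ w₂ := stepReach hν hkpne hnorm₂ hdiff₂
  refine ⟨w₂, reach_trans hreach₁ hreach₂, hw₂k, ?_⟩
  intro m hm0 hm1 hmk hm0v
  have hml : m ≠ l := by
    intro he
    rcases hlz with h | h | h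
    · apply h; rw [← he]; exact hm0v
    · exact hm0 (he.trans h)
    · exact hm1 (he.trans h)
  have hmp : m ≠ p := by
    rcases hp01 with h | h
    · rw [h]; exact hm0
    · rw [h]; exact hm1
  rw [hw₂o m hmk hmp, hw₁o m hmk hml]
  exact hm0v

/-- Iterate `kill_one` to put all velocity on the two helper balls. -/
lemma reach_clean (hν : 2 ≤ ν) {z₀ z₁ : Fin N} (hz : z₀ ≠ z₁) (v : ↥(momZero N ν)) :
    ∃ x : ↥(momZero N ν), Reach N ν v x ∧ ∀ m, m ≠ z₀ → m ≠ z₁ →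
      compv (x : EuclideanSpace ℝ (Fin N × Fin ν)) m = 0 := by
  classical
  suffices H : ∀ n : ℕ, ∀ v : ↥(momZero N ν),
      (Finset.univ.filter (fun m => m ≠ z₀ ∧ m ≠ z₁ ∧
        compv (v : EuclideanSpace ℝ (Fin N × Fin ν)) m ≠ 0)).card ≤ n →
      ∃ x : ↥(momZero N ν), Reach N ν v x ∧ ∀ m, m ≠ z₀ → m ≠ z₁ →
        compv (x : EuclideanSpace ℝ (Fin N × Fin ν)) m = 0 by
    exact H _ v le_rfl
  intro n
  induction n with
  | zero =>
    intro v hv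
    refine ⟨v, reach_refl v, ?_⟩
    intro m h0 h1
    by_contra hne
    have hmem : m ∈ Finset.univ.filter (fun m => m ≠ z₀ ∧ m ≠ z₁ ∧
        compv (v : EuclideanSpace ℝ (Fin N × Fin ν)) m ≠ 0) :=
      Finset.mem_filter.mpr ⟨Finset.mem_univ m, h0, h1, hne⟩
    rw [Nat.le_zero, Finset.card_eq_zero] at hv
    rw [hv] at hmem
    exact absurd hmem (Finset.notMem_empty m)
  | succ n ih =>
    intro v hv
    rcases Finset.eq_empty_or_nonempty (Finset.univ.filter (fun m => m ≠ z₀ ∧ m ≠ z₁ ∧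
        compv (v : EuclideanSpace ℝ (Fin N × Fin ν)) m ≠ 0)) with he | ⟨k, hkmem⟩
    · refine ⟨v, reach_refl v, ?_⟩
      intro m h0 h1
      by_contra hne
      have hmem : m ∈ Finset.univ.filter (fun m => m ≠ z₀ ∧ m ≠ z₁ ∧
          compv (v : EuclideanSpace ℝ (Fin N × Fin ν)) m ≠ 0) :=
        Finset.mem_filter.mpr ⟨Finset.mem_univ m, h0, h1, hne⟩
      rw [he] at hmem
      exact absurd hmem (Finset.notMem_empty m)
    · obtain ⟨-, hk0, hk1, hkne⟩ := Finset.mem_filter.mp hkmem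
      obtain ⟨x, hrx, hxk, hxkeep⟩ := kill_one hν hz hk0 hk1 v
      have hsub : (Finset.univ.filter (fun m => m ≠ z₀ ∧ m ≠ z₁ ∧
          compv (x : EuclideanSpace ℝ (Fin N × Fin ν)) m ≠ 0)) ⊆
          (Finset.univ.filter (fun m => m ≠ z₀ ∧ m ≠ z₁ ∧
          compv (v : EuclideanSpace ℝ (Fin N × Fin ν)) m ≠ 0)).erase k := by
        intro m hm
        obtain ⟨-, h0, h1, hne⟩ := Finset.mem_filter.mp hm
        have hmk : m ≠ k := by
          rintro rfl
          exact hne hxk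
        refine Finset.mem_erase.mpr ⟨hmk, Finset.mem_filter.mpr ⟨Finset.mem_univ _, h0, h1, ?_⟩⟩
        intro hv0
        exact hne (hxkeep m h0 h1 hmk hv0)
      have hcard : (Finset.univ.filter (fun m => m ≠ z₀ ∧ m ≠ z₁ ∧
          compv (x : EuclideanSpace ℝ (Fin N × Fin ν)) m ≠ 0)).card ≤ n := by
        calc _ ≤ ((Finset.univ.filter (fun m => m ≠ z₀ ∧ m ≠ z₁ ∧
              compv (v : EuclideanSpace ℝ (Fin N × Fin ν)) m ≠ 0)).erase k).card :=
            Finset.card_le_card hsub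
          _ = (Finset.univ.filter (fun m => m ≠ z₀ ∧ m ≠ z₁ ∧
              compv (v : EuclideanSpace ℝ (Fin N × Fin ν)) m ≠ 0)).card - 1 :=
            Finset.card_erase_of_mem hkmem
          _ ≤ n := by omega
      obtain ⟨y, hry, hy⟩ := ih x hcard
      exact ⟨y, reach_trans hrx hry, hy⟩

end HardBall


/-- The system of base spaces of the hard ball system is transitive: the group
generated by the `𝒢_{ij}` acts transitively on the unit sphere of `𝒵`. -/
theorem hardBall_transitive (N ν : ℕ) (hN : 2 ≤ N) (hν : 2 ≤ ν) :
    ∀ u w : ↥(momZero N ν), ‖u‖ = 1 → ‖w‖ = 1 →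
      ∃ U ∈ Subgroup.closure
          (⋃ (p : Fin N × Fin N) (_ : p.1 < p.2), rotBall N ν p.1 p.2),
        U u = w := by
  intro u w hu hw
  set z₀ : Fin N := ⟨0, by omega⟩ with hz₀
  set z₁ : Fin N := ⟨1, by omega⟩ with hz₁
  have hz : z₀ ≠ z₁ := by
    rw [hz₀, hz₁]
    simp [Fin.ext_iff]
  obtain ⟨u', hru, hu'⟩ := HardBall.reach_clean hν hz u
  obtain ⟨w', hrw, hw'⟩ := HardBall.reach_clean hν hz w
  have hnorm : ‖u'‖ = ‖w'‖ := by
    rw [← HardBall.reach_norm hru, ← HardBall.reach_norm hrw, hu, hw]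
  have hdiff : u' - w' ∈ baseSpace N ν z₀ z₁ := by
    intro m h0 h1 a
    have e1 := congrArg (fun f : EuclideanSpace ℝ (Fin ν) => f a) (hu' m h0 h1)
    have e2 := congrArg (fun f : EuclideanSpace ℝ (Fin ν) => f a) (hw' m h0 h1)
    show ((u' : EuclideanSpace ℝ (Fin N × Fin ν))
      - (w' : EuclideanSpace ℝ (Fin N × Fin ν))) (m, a) = 0
    rw [PiLp.sub_apply]
    simp only [HardBall.compv_apply] at e1 e2
    rw [e1, e2]
    simp
  have hmid : HardBall.Reach N ν u' w' := HardBall.stepReach hν hz hnorm hdiff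
  exact HardBall.reach_trans (HardBall.reach_trans hru hmid) (HardBall.reach_symm hrw)
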